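/- Given an interval I ⊂ ℝ and S = ⋃_{j=1}^m S_j ⊂ I a finite union of pairwise disjoint intervals with |S| > 0, there exists a function f : ℝ → [0, 1] supported in I such that: (i) f(x) = 1 for x ∈ S; (ii) f(x) ≥ |S|/|I| for x ∈ I; (iii) for every λ with |S|/|I| < λ ≤ 1, the level set {x : f(x) ≥ λ} is a finite union of pairwise disjoint intervals J_{k,λ}, each satisfying |S ∩ J_{k,λ}| = λ|J_{k,λ}|, and J_{k,λ} ∩ S is a union of some of the intervals S_j. -/

import Mathlib

open MeasureTheory Function Set Topology Filter
open scoped Classical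

namespace Stmt15Aux

structure Cfg : Type where
  a : ℝ
  b : ℝ
  m : ℕ
  C : ℕ → ℝ
  D : ℕ → ℝ
  hab : a < b
  hm : 0 < m
  hCD : ∀ n, n < m → C n < D n
  hsort : ∀ n n', n < n' → n' < m → D n ≤ C n'
  ha : ∀ n, n < m → a ≤ C n
  hb' : ∀ n, n < m → D n ≤ b
  hCs : ∀ n, m ≤ n → C n = b
  hDs : ∀ n, m ≤ n → D n = b

namespace Cfg

variable (K : Cfg)

noncomputable def w (n : ℕ) : ℝ := K.D n - K.C n

noncomputable def W (k : ℕ) : ℝ := ∑ n ∈ Finset.range k, K.w n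

noncomputable def Wm : ℝ := K.W K.m

noncomputable def s : ℝ := K.Wm / (K.b - K.a)

def Sset : Set ℝ := ⋃ n ∈ Finset.range K.m, Ioo (K.C n) (K.D n)

lemma w_nonneg (n : ℕ) : 0 ≤ K.w n := by
  rcases lt_or_ge n K.m with h | h
  · exact le_of_lt (sub_pos.2 (K.hCD n h))
  · simp [w, K.hCs n h, K.hDs n h]

lemma w_pos {n : ℕ} (h : n < K.m) : 0 < K.w n := sub_pos.2 (K.hCD n h)

lemma W_succ (k : ℕ) : K.W (k+1) = K.W k + K.w k := Finset.sum_range_succ _ _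

lemma W_mono : Monotone K.W := by
  intro i j hij
  exact Finset.sum_le_sum_of_subset_of_nonneg (Finset.range_subset_range.2 hij)
    (fun n _ _ => K.w_nonneg n)

lemma W_zero : K.W 0 = 0 := by simp [W]

lemma Wm_pos : 0 < K.Wm := by
  have h1 : 0 < K.w 0 := K.w_pos K.hm
  have h2 : K.W 1 = K.w 0 := by rw [W_succ, W_zero]; ring
  have h3 : K.W 1 ≤ K.Wm := K.W_mono K.hm
  linarith

lemma aW_le_C : ∀ k, k < K.m → K.a + K.W k ≤ K.C k := by
  intro k
  induction k with
  | zero => intro h; simpa [W_zero] using K.ha 0 h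
  | succ n ih =>
    intro h
    have hn : n < K.m := Nat.lt_of_succ_lt h
    have h1 := ih hn
    have h2 : K.D n ≤ K.C (n+1) := K.hsort n (n+1) (Nat.lt_succ_self n) h
    have h3 : K.a + K.W (n+1) = (K.a + K.W n) + K.w n := by rw [W_succ]; ring
    have h4 : K.C n + K.w n = K.D n := by simp [w]
    linarith

lemma Wm_le : K.a + K.Wm ≤ K.b := by
  obtain ⟨p, hp⟩ : ∃ p, K.m = p + 1 := ⟨K.m - 1, (Nat.succ_pred_eq_of_pos K.hm).symm⟩
  have hpm : p < K.m := by omega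
  have h1 := K.aW_le_C p hpm
  have h3 : K.a + K.Wm = (K.a + K.W p) + K.w p := by rw [Wm, hp, W_succ]; ring
  have h4 : K.C p + K.w p = K.D p := by simp [w]
  have h5 := K.hb' p hpm
  linarith

lemma s_pos : 0 < K.s := div_pos K.Wm_pos (sub_pos.2 K.hab)

lemma s_le_one : K.s ≤ 1 := by
  rw [s, div_le_one (sub_pos.2 K.hab)]
  linarith [K.Wm_le]

lemma C_mono : Monotone K.C := by
  intro n n' h
  rcases eq_or_lt_of_le h with rfl | h
  · exact le_rfl
  rcases lt_or_ge n' K.m with h' | h'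
  · have := K.hsort n n' h h'
    have := K.hCD n (lt_trans h h')
    linarith
  · rw [K.hCs n' h']
    rcases lt_or_ge n K.m with hn | hn
    · have := K.hCD n hn
      have := K.hb' n hn
      linarith
    · rw [K.hCs n hn]

lemma Sset_subset_Ioo : K.Sset ⊆ Ioo K.a K.b := by
  intro x hx
  simp only [Sset, mem_iUnion, Finset.mem_range] at hx
  obtain ⟨n, hn, hx⟩ := hx
  exact ⟨lt_of_le_of_lt (K.ha n hn) hx.1, lt_of_lt_of_le hx.2 (K.hb' n hn)⟩

lemma disj_lt {n n' : ℕ} (h : n < n') (h' : n' < K.m) :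
    Disjoint (Ioo (K.C n) (K.D n)) (Ioo (K.C n') (K.D n')) := by
  rw [Set.disjoint_left]
  intro x hx hx'
  exact absurd (hx.2.trans_le (K.hsort n n' h h')) (not_lt.2 hx'.1.le)

lemma vol_Sset : volume K.Sset = ENNReal.ofReal K.Wm := by
  rw [Sset, measure_biUnion_finset]
  · rw [Wm, W]
    rw [ENNReal.ofReal_sum_of_nonneg (fun n _ => K.w_nonneg n)]
    exact Finset.sum_congr rfl (fun n _ => (Real.volume_Ioo).symm ▸ rfl)
  · intro i hi j hj hij
    simp only [Finset.coe_sort_coe, Finset.mem_coe, Finset.mem_range] at hi hj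
    rcases lt_or_gt_of_ne hij with h | h
    · exact K.disj_lt h hj
    · exact (K.disj_lt h hi).symm
  · exact fun n _ => measurableSet_Ioo


/-! ### Level-set construction for a fixed level `l` -/

noncomputable def R (l : ℝ) : ℕ → ℝ
  | 0 => K.C 0 + K.w 0 / l
  | n+1 => max (R l n) (K.C (n+1)) + K.w (n+1) / l

lemma R_zero (l : ℝ) : K.R l 0 = K.C 0 + K.w 0 / l := by rw [R]

lemma R_succ (l : ℝ) (n : ℕ) :
    K.R l (n+1) = max (K.R l n) (K.C (n+1)) + K.w (n+1) / l := by rw [R]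

def capt (l : ℝ) (j : ℕ) : Prop := K.b ≤ K.C j + (K.Wm - K.W j) / l

lemma capt_total (l : ℝ) : ∃ j, K.capt l j := by
  refine ⟨K.m, ?_⟩
  unfold capt
  rw [K.hCs K.m le_rfl]
  simp [Wm]

noncomputable def istar (l : ℝ) : ℕ := Nat.find (K.capt_total l)

lemma istar_le (l : ℝ) : K.istar l ≤ K.m := Nat.find_le (by
  unfold capt
  rw [K.hCs K.m le_rfl]
  simp [Wm])

lemma capt_istar (l : ℝ) : K.capt l (K.istar l) := Nat.find_spec (K.capt_total l)

lemma not_capt {l : ℝ} {j : ℕ} (h : j < K.istar l) : ¬ K.capt l j :=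
  Nat.find_min (K.capt_total l) h

noncomputable def xw (l : ℝ) : ℝ := K.b - (K.Wm - K.W (K.istar l)) / l

def U (l : ℝ) : Set ℝ :=
  ((⋃ i ∈ Finset.range (K.istar l), Icc (K.C i) (K.R l i)) ∪ Ico (K.xw l) K.b) ∩ Ioo K.a K.b

lemma U_subset_Ioo (l : ℝ) : K.U l ⊆ Ioo K.a K.b := inter_subset_right

section Level

variable {l : ℝ}

lemma l_pos (hsl : K.s < l) : 0 < l := lt_trans K.s_pos hsl

lemma C_add_le_R (hl0 : 0 < l) (n : ℕ) : K.C n + K.w n / l ≤ K.R l n := by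
  cases n with
  | zero => rw [R_zero]
  | succ p => rw [R_succ]; exact add_le_add_left (le_max_right _ _) _

lemma C_le_R (hl0 : 0 < l) (n : ℕ) : K.C n ≤ K.R l n := by
  have := K.C_add_le_R hl0 n
  have h2 : 0 ≤ K.w n / l := div_nonneg (K.w_nonneg n) hl0.le
  linarith

lemma D_le_R (hl0 : 0 < l) (hl1 : l ≤ 1) (n : ℕ) : K.D n ≤ K.R l n := by
  have h1 := K.C_add_le_R hl0 n
  have h2 : K.w n ≤ K.w n / l := by
    rw [le_div_iff₀ hl0]
    exact mul_le_of_le_one_right (K.w_nonneg n) hl1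
  have h3 : K.D n = K.C n + K.w n := by simp [w]
  linarith

lemma R_mono_idx (hl0 : 0 < l) : Monotone (K.R l) := by
  have h : ∀ n, K.R l n ≤ K.R l (n+1) := by
    intro n
    have h2 : 0 ≤ K.w (n+1) / l := div_nonneg (K.w_nonneg _) hl0.le
    have h3 : K.R l n ≤ max (K.R l n) (K.C (n+1)) := le_max_left _ _
    rw [R_succ]
    linarith
  exact monotone_nat_of_le_succ h

lemma prewall (hl0 : 0 < l) : ∀ i, i < K.istar l → K.R l i + (K.Wm - K.W (i+1)) / l < K.b := by
  intro i
  induction i with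
  | zero =>
    intro h
    have hnc := K.not_capt h
    unfold capt at hnc
    push_neg at hnc
    have harith : K.w 0 / l + (K.Wm - K.W 1) / l = (K.Wm - K.W 0) / l := by
      rw [← add_div]
      congr 1
      rw [W_succ]
      ring
    rw [R_zero, add_assoc, harith]
    exact hnc
  | succ n ih =>
    intro h
    have hnc := K.not_capt h
    unfold capt at hnc
    push_neg at hnc
    have harith : K.w (n+1) / l + (K.Wm - K.W (n+2)) / l = (K.Wm - K.W (n+1)) / l := by
      rw [← add_div]
      congr 1
      rw [W_succ]
      ring
    rw [R_succ, add_assoc, harith]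
    rcases max_cases (K.R l n) (K.C (n+1)) with ⟨heq, _⟩ | ⟨heq, _⟩
    · rw [heq]
      exact ih (Nat.lt_of_succ_lt h)
    · rw [heq]
      exact hnc

lemma xw_le_b (hl0 : 0 < l) : K.xw l ≤ K.b := by
  have h1 : K.W (K.istar l) ≤ K.Wm := K.W_mono (K.istar_le l)
  have h2 : 0 ≤ (K.Wm - K.W (K.istar l)) / l := div_nonneg (by linarith) hl0.le
  unfold xw
  linarith

lemma R_lt_xw (hl0 : 0 < l) {i : ℕ} (h : i < K.istar l) : K.R l i < K.xw l := by
  have h1 := K.prewall hl0 i h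
  have h2 : K.W (i+1) ≤ K.W (K.istar l) := K.W_mono h
  have h3 : (K.Wm - K.W (K.istar l)) / l ≤ (K.Wm - K.W (i+1)) / l :=
    (div_le_div_iff_of_pos_right hl0).2 (by linarith)
  unfold xw
  linarith

lemma xw_gt_a (hsl : K.s < l) : K.a < K.xw l := by
  have hl0 := K.l_pos hsl
  have h1 : 0 ≤ K.W (K.istar l) := by
    have := K.W_mono (Nat.zero_le (K.istar l))
    simpa [W_zero] using this
  have h2 : K.Wm < l * (K.b - K.a) := by
    have := (div_lt_iff₀ (sub_pos.2 K.hab)).1 hsl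
    linarith
  have h3 : (K.Wm - K.W (K.istar l)) / l ≤ K.Wm / l :=
    (div_le_div_iff_of_pos_right hl0).2 (by linarith)
  have h4 : K.Wm / l < K.b - K.a := by
    rw [div_lt_iff₀ hl0]
    linarith
  unfold xw
  linarith

lemma xw_le_C_istar (hl0 : 0 < l) : K.xw l ≤ K.C (K.istar l) := by
  have := K.capt_istar l
  unfold capt at this
  unfold xw
  linarith


lemma S_subset_U (hsl : K.s < l) (hl1 : l ≤ 1) : K.Sset ⊆ K.U l := by
  intro x hx
  have hIoo := K.Sset_subset_Ioo hx
  simp only [Sset, mem_iUnion, Finset.mem_range] at hx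
  obtain ⟨n, hn, hxn⟩ := hx
  have hl0 := K.l_pos hsl
  refine ⟨?_, hIoo⟩
  rcases lt_or_ge n (K.istar l) with h | h
  · left
    simp only [mem_iUnion, Finset.mem_range]
    exact ⟨n, h, hxn.1.le, hxn.2.le.trans (K.D_le_R hl0 hl1 n)⟩
  · right
    constructor
    · calc K.xw l ≤ K.C (K.istar l) := K.xw_le_C_istar hl0
      _ ≤ K.C n := K.C_mono h
      _ ≤ x := hxn.1.le
    · exact hIoo.2

lemma R_anti {l' : ℝ} (hl0' : 0 < l') (hll : l' ≤ l) (n : ℕ) : K.R l n ≤ K.R l' n := by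
  induction n with
  | zero =>
    rw [R_zero, R_zero]
    exact add_le_add_right (div_le_div_of_nonneg_left (K.w_nonneg 0) hl0' hll) _
  | succ p ih =>
    rw [R_succ, R_succ]
    exact add_le_add (max_le_max ih le_rfl)
      (div_le_div_of_nonneg_left (K.w_nonneg _) hl0' hll)

lemma capt_anti {l' : ℝ} (hl0' : 0 < l') (hll : l' ≤ l) {j : ℕ} (hj : j ≤ K.m)
    (h : K.capt l j) : K.capt l' j := by
  unfold capt at *
  have hW : 0 ≤ K.Wm - K.W j := by
    have := K.W_mono hj
    unfold Wm
    linarith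
  have : (K.Wm - K.W j) / l ≤ (K.Wm - K.W j) / l' :=
    div_le_div_of_nonneg_left hW hl0' hll
  linarith

lemma istar_anti {l' : ℝ} (hl0' : 0 < l') (hll : l' ≤ l) : K.istar l' ≤ K.istar l :=
  Nat.find_le (K.capt_anti hl0' hll (K.istar_le l) (K.capt_istar l))

lemma xw_anti {l' : ℝ} (hl0 : 0 < l) (hl0' : 0 < l') (hll : l' ≤ l) : K.xw l' ≤ K.xw l := by
  have h1 : K.W (K.istar l') ≤ K.W (K.istar l) := K.W_mono (K.istar_anti hl0' hll)
  have h2 : K.W (K.istar l) ≤ K.Wm := K.W_mono (K.istar_le l)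
  have h3 : (K.Wm - K.W (K.istar l)) / l ≤ (K.Wm - K.W (K.istar l)) / l' :=
    div_le_div_of_nonneg_left (by linarith) hl0' hll
  have h4 : (K.Wm - K.W (K.istar l)) / l' ≤ (K.Wm - K.W (K.istar l')) / l' :=
    (div_le_div_iff_of_pos_right hl0').2 (by linarith)
  unfold xw
  linarith

lemma U_anti {l' : ℝ} (hsl' : K.s < l') (hll : l' ≤ l) : K.U l ⊆ K.U l' := by
  have hl0' := K.l_pos hsl'
  have hl0 : 0 < l := lt_of_lt_of_le hl0' hll
  intro x hx
  obtain ⟨hmem, hIoo⟩ := hx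
  refine ⟨?_, hIoo⟩
  rcases hmem with hmem | hmem
  · simp only [mem_iUnion, Finset.mem_range] at hmem
    obtain ⟨i, hi, hxi⟩ := hmem
    rcases lt_or_ge i (K.istar l') with h | h
    · left
      simp only [mem_iUnion, Finset.mem_range]
      exact ⟨i, h, hxi.1, hxi.2.trans (K.R_anti hl0' hll i)⟩
    · right
      refine ⟨?_, hIoo.2⟩
      calc K.xw l' ≤ K.C (K.istar l') := K.xw_le_C_istar hl0'
      _ ≤ K.C i := K.C_mono h
      _ ≤ x := hxi.1
  · exact Or.inr ⟨le_trans (K.xw_anti hl0 hl0' hll) hmem.1, hIoo.2⟩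

lemma R_cont (hl : l ≠ 0) (n : ℕ) : ContinuousAt (fun t => K.R t n) l := by
  induction n with
  | zero =>
    have : (fun t => K.R t 0) = fun t => K.C 0 + K.w 0 / t := funext fun t => K.R_zero t
    rw [this]
    exact continuousAt_const.add (continuousAt_const.div continuousAt_id hl)
  | succ p ih =>
    have : (fun t => K.R t (p+1)) = fun t => max (K.R t p) (K.C (p+1)) + K.w (p+1) / t :=
      funext fun t => K.R_succ t p
    rw [this]
    exact (ih.max continuousAt_const).add (continuousAt_const.div continuousAt_id hl)

lemma istar_eventually (hsl : K.s < l) :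
    ∀ᶠ μ in 𝓝[<] l, K.istar μ = K.istar l ∧ K.s < μ ∧ 0 < μ ∧ μ < l := by
  have hl0 := K.l_pos hsl
  have E1 : ∀ᶠ μ in 𝓝 l, K.s < μ := isOpen_Ioi.eventually_mem (show l ∈ Ioi K.s from hsl)
  have E0 : ∀ᶠ μ in 𝓝 l, 0 < μ := isOpen_Ioi.eventually_mem (show l ∈ Ioi (0:ℝ) from hl0)
  have E2 : ∀ᶠ μ in 𝓝 l, ∀ j ∈ Finset.range (K.istar l), K.C j + (K.Wm - K.W j) / μ < K.b := by
    rw [Finset.eventually_all]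
    intro j hj
    simp only [Finset.mem_range] at hj
    have hnc := K.not_capt hj
    unfold capt at hnc
    push_neg at hnc
    have hcont : ContinuousAt (fun μ : ℝ => K.C j + (K.Wm - K.W j) / μ) l :=
      continuousAt_const.add (continuousAt_const.div continuousAt_id hl0.ne')
    exact hcont.eventually_lt_const hnc
  have E3 : ∀ᶠ μ in 𝓝[<] l, μ < l := eventually_mem_nhdsWithin
  filter_upwards [eventually_nhdsWithin_of_eventually_nhds E1,
    eventually_nhdsWithin_of_eventually_nhds E0,
    eventually_nhdsWithin_of_eventually_nhds E2, E3] with μ h1 h0 h2 h3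
  refine ⟨?_, h1, h0, h3⟩
  have hle : K.istar μ ≤ K.istar l := K.istar_anti h0 h3.le
  have hge : K.istar l ≤ K.istar μ := by
    by_contra hlt
    push_neg at hlt
    have hc := K.capt_istar μ
    unfold capt at hc
    exact absurd hc (not_le.2 (h2 _ (Finset.mem_range.2 hlt)))
  omega

lemma U_leftcont (hsl : K.s < l) {x : ℝ}
    (hyp : ∀ μ, K.s < μ → μ < l → x ∈ K.U μ) : x ∈ K.U l := by
  have hl0 := K.l_pos hsl
  have hx : x ∈ Ioo K.a K.b := by
    have hμ : K.s < (K.s + l) / 2 ∧ (K.s + l) / 2 < l := by constructor <;> linarith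
    exact K.U_subset_Ioo _ (hyp _ hμ.1 hμ.2)
  by_contra hxl
  have hnot : (∀ i ∈ Finset.range (K.istar l), x ∉ Icc (K.C i) (K.R l i)) ∧ x < K.xw l := by
    constructor
    · intro i hi hmem
      exact hxl ⟨Or.inl (mem_iUnion.2 ⟨i, mem_iUnion.2 ⟨hi, hmem⟩⟩), hx⟩
    · by_contra hge
      push_neg at hge
      exact hxl ⟨Or.inr ⟨hge, hx.2⟩, hx⟩
  have E4 : ∀ᶠ μ in 𝓝 l, ∀ i ∈ Finset.range (K.istar l), x ∉ Icc (K.C i) (K.R μ i) := by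
    rw [Finset.eventually_all]
    intro i hi
    rcases le_or_gt (K.C i) x with hCx | hCx
    · have hRx : K.R l i < x := by
        by_contra hc
        push_neg at hc
        exact hnot.1 i hi ⟨hCx, hc⟩
      have := (K.R_cont hl0.ne' i).eventually_lt_const hRx
      filter_upwards [this] with μ hμ hmem
      exact absurd hmem.2 (not_le.2 hμ)
    · filter_upwards with μ hmem
      exact absurd hmem.1 (not_le.2 hCx)
  have E5 : ∀ᶠ μ in 𝓝 l, x < K.b - (K.Wm - K.W (K.istar l)) / μ := by
    have hcont : ContinuousAt (fun μ : ℝ => K.b - (K.Wm - K.W (K.istar l)) / μ) l :=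
      continuousAt_const.sub (continuousAt_const.div continuousAt_id hl0.ne')
    exact hcont.eventually_const_lt hnot.2
  have := (K.istar_eventually hsl).and
    ((eventually_nhdsWithin_of_eventually_nhds E4).and
      (eventually_nhdsWithin_of_eventually_nhds E5))
  obtain ⟨μ, ⟨hist, hsμ, h0μ, hμl⟩, hE4, hE5⟩ := this.exists
  have hxU := hyp μ hsμ hμl
  obtain ⟨hmem, -⟩ := hxU
  rcases hmem with hmem | hmem
  · simp only [mem_iUnion, Finset.mem_range] at hmem
    obtain ⟨i, hi, hxi⟩ := hmem
    rw [hist] at hi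
    exact hE4 i (Finset.mem_range.2 hi) hxi
  · have : K.xw μ = K.b - (K.Wm - K.W (K.istar l)) / μ := by rw [xw, hist]
    rw [this] at hmem
    exact absurd hmem.1 (not_le.2 hE5)

end Level


/-! ### The function `f` -/

noncomputable def Aset (x : ℝ) : Set ℝ := insert K.s {t : ℝ | (K.s < t ∧ t ≤ 1) ∧ x ∈ K.U t}

noncomputable def f (x : ℝ) : ℝ := if x ∈ Ioo K.a K.b then sSup (K.Aset x) else 0

lemma Aset_nonempty (x : ℝ) : (K.Aset x).Nonempty := ⟨K.s, mem_insert _ _⟩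

lemma Aset_le_one (x : ℝ) : ∀ t ∈ K.Aset x, t ≤ 1 := by
  rintro t (rfl | ⟨⟨-, h⟩, -⟩)
  · exact K.s_le_one
  · exact h

lemma Aset_bdd (x : ℝ) : BddAbove (K.Aset x) := ⟨1, fun t ht => K.Aset_le_one x t ht⟩

lemma f_eq_zero {x : ℝ} (hx : x ∉ Ioo K.a K.b) : K.f x = 0 := if_neg hx

lemma f_le_one (x : ℝ) : K.f x ≤ 1 := by
  unfold f
  split
  · exact csSup_le (K.Aset_nonempty x) (K.Aset_le_one x)
  · exact zero_le_one

lemma f_ge_s {x : ℝ} (hx : x ∈ Ioo K.a K.b) : K.s ≤ K.f x := by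
  unfold f
  rw [if_pos hx]
  exact le_csSup (K.Aset_bdd x) (mem_insert _ _)

lemma f_nonneg (x : ℝ) : 0 ≤ K.f x := by
  rcases em (x ∈ Ioo K.a K.b) with hx | hx
  · exact le_trans K.s_pos.le (K.f_ge_s hx)
  · rw [K.f_eq_zero hx]

lemma f_eq_one {x : ℝ} (hx : x ∈ K.Sset) : K.f x = 1 := by
  have hIoo := K.Sset_subset_Ioo hx
  refine le_antisymm (K.f_le_one x) ?_
  rcases eq_or_lt_of_le K.s_le_one with hs1 | hs1
  · rw [← hs1]; exact K.f_ge_s hIoo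
  · have h1 : (1:ℝ) ∈ K.Aset x := by
      right
      exact ⟨⟨hs1, le_rfl⟩, K.S_subset_U hs1 le_rfl hx⟩
    unfold f
    rw [if_pos hIoo]
    exact le_csSup (K.Aset_bdd x) h1

lemma levelset {l : ℝ} (hsl : K.s < l) (hl1 : l ≤ 1) : {x | l ≤ K.f x} = K.U l := by
  have hl0 := K.l_pos hsl
  ext x
  simp only [mem_setOf_eq]
  constructor
  · intro hfx
    have hx : x ∈ Ioo K.a K.b := by
      by_contra hc
      rw [K.f_eq_zero hc] at hfx
      linarith
    apply K.U_leftcont hsl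
    intro μ hsμ hμl
    have hlt : μ < K.f x := lt_of_lt_of_le hμl hfx
    unfold f at hlt
    rw [if_pos hx] at hlt
    obtain ⟨ν, hν, hμν⟩ := exists_lt_of_lt_csSup (K.Aset_nonempty x) hlt
    rcases hν with rfl | ⟨⟨hsν, hν1⟩, hxν⟩
    · exact absurd hsμ (not_lt.2 hμν.le)
    · exact K.U_anti hsμ hμν.le hxν
  · intro hxU
    have hx := K.U_subset_Ioo l hxU
    have hmem : l ∈ K.Aset x := Or.inr ⟨⟨hsl, hl1⟩, hxU⟩
    unfold f
    rw [if_pos hx]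
    exact le_csSup (K.Aset_bdd x) hmem


/-! ### Decomposition of the level set into components -/

def BreakP (l : ℝ) (h i : ℕ) : Prop :=
  h ≤ i ∧ (i + 1 = K.istar l ∨ K.R l i < K.C (i+1) ∨ K.m ≤ i)

lemma exBreak (l : ℝ) (h : ℕ) : ∃ i, K.BreakP l h i :=
  ⟨max h K.m, le_max_left _ _, Or.inr (Or.inr (le_max_right _ _))⟩

noncomputable def eIdx (l : ℝ) (h : ℕ) : ℕ := Nat.find (K.exBreak l h)

lemma eIdx_ge (l : ℝ) (h : ℕ) : h ≤ K.eIdx l h := (Nat.find_spec (K.exBreak l h)).1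

lemma eIdx_break (l : ℝ) (h : ℕ) :
    K.eIdx l h + 1 = K.istar l ∨ K.R l (K.eIdx l h) < K.C (K.eIdx l h + 1) ∨
      K.m ≤ K.eIdx l h := (Nat.find_spec (K.exBreak l h)).2

lemma noBreak {l : ℝ} {h i : ℕ} (hhi : h ≤ i) (hi : i < K.eIdx l h) :
    i + 1 ≠ K.istar l ∧ K.C (i+1) ≤ K.R l i ∧ i < K.m := by
  have hmin := Nat.find_min (K.exBreak l h) hi
  unfold BreakP at hmin
  push_neg at hmin
  obtain ⟨h1, h2, h3⟩ := hmin hhi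
  exact ⟨h1, h2, h3⟩

lemma eIdx_lt_istar {l : ℝ} {h : ℕ} (hh : h < K.istar l) : K.eIdx l h < K.istar l := by
  have hfind : K.eIdx l h ≤ K.istar l - 1 :=
    Nat.find_le ⟨by omega, Or.inl (by omega)⟩
  omega

def Head (l : ℝ) (n : ℕ) : Prop := ∀ p, n = p + 1 → K.R l p < K.C n

lemma head_zero (l : ℝ) : K.Head l 0 := fun p hp => absurd hp (by omega)

lemma run_bal {l : ℝ} (hl0 : 0 < l) {h : ℕ} (hh : K.Head l h) :
    ∀ i, h ≤ i → i ≤ K.eIdx l h → K.R l i = K.C h + (K.W (i+1) - K.W h) / l := by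
  intro i hhi
  induction i, hhi using Nat.le_induction with
  | base =>
    intro _
    have harith : (K.W (h+1) - K.W h) / l = K.w h / l := by rw [W_succ]; ring_nf
    rw [harith]
    cases h with
    | zero => rw [R_zero]
    | succ p =>
      rw [R_succ]
      rw [max_eq_right (hh p rfl).le]
  | succ n hn ih =>
    intro hle
    have hnb := K.noBreak (l := l) hn (by omega)
    rw [R_succ, max_eq_left hnb.2.1, ih (by omega), K.W_succ (n+1)]
    have harith : (K.W (n+1) - K.W h) / l + K.w (n+1) / l
        = (K.W (n+1) + K.w (n+1) - K.W h) / l := by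
      rw [← add_div]
      congr 1
      ring
    rw [add_assoc, harith]

lemma run_cover {l : ℝ} (hl0 : 0 < l) {h : ℕ} (hhi : h < K.istar l) :
    ∀ i, h ≤ i → i ≤ K.eIdx l h →
      Icc (K.C h) (K.R l i) ⊆ ⋃ i ∈ Finset.range (K.istar l), Icc (K.C i) (K.R l i) := by
  intro i hhle
  induction i, hhle using Nat.le_induction with
  | base =>
    intro _ x hx
    exact mem_iUnion.2 ⟨h, mem_iUnion.2 ⟨Finset.mem_range.2 hhi, hx⟩⟩
  | succ n hn ih =>
    intro hle x hx
    rcases le_or_gt x (K.R l n) with hxn | hxn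
    · exact ih (by omega) ⟨hx.1, hxn⟩
    · have hnb := K.noBreak (l := l) hn (by omega)
      have hn1 : n + 1 < K.istar l := lt_of_le_of_lt hle (K.eIdx_lt_istar hhi)
      exact mem_iUnion.2 ⟨n+1, mem_iUnion.2
        ⟨Finset.mem_range.2 hn1, ⟨le_of_lt (lt_of_le_of_lt hnb.2.1 hxn), hx.2⟩⟩⟩

lemma head_sep {l : ℝ} {h h' : ℕ} (hh' : K.Head l h') (hlt : h < h')
    (hi' : h' < K.istar l) : K.R l (K.eIdx l h) < K.C h' := by
  have hstep1 : K.eIdx l h < h' := by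
    by_contra hle
    push_neg at hle
    obtain ⟨p, rfl⟩ : ∃ p, h' = p + 1 := ⟨h' - 1, by omega⟩
    have hnb := K.noBreak (l := l) (show h ≤ p by omega) (by omega)
    exact absurd (hh' p rfl) (not_lt.2 hnb.2.1)
  rcases K.eIdx_break l h with hbr | hbr | hbr
  · omega
  · exact lt_of_lt_of_le hbr (K.C_mono (by omega))
  · have := lt_of_lt_of_le hi' (K.istar_le l)
    omega

noncomputable def headOf (l : ℝ) (i : ℕ) : ℕ := Nat.findGreatest (K.Head l) i

lemma headOf_head (l : ℝ) (i : ℕ) : K.Head l (K.headOf l i) :=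
  Nat.findGreatest_spec (Nat.zero_le i) (K.head_zero l)

lemma headOf_le (l : ℝ) (i : ℕ) : K.headOf l i ≤ i := Nat.findGreatest_le i

lemma le_eIdx_headOf {l : ℝ} {i : ℕ} (hi : i < K.istar l) : i ≤ K.eIdx l (K.headOf l i) := by
  by_contra hc
  push_neg at hc
  have hhle : K.headOf l i ≤ i := K.headOf_le l i
  have hhe : K.headOf l i ≤ K.eIdx l (K.headOf l i) := K.eIdx_ge l _
  rcases K.eIdx_break l (K.headOf l i) with hbr | hbr | hbr
  · omega
  · have hhead : K.Head l (K.eIdx l (K.headOf l i) + 1) := by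
      intro p hp
      have hp' : p = K.eIdx l (K.headOf l i) := by omega
      rw [hp']
      exact hbr
    exact Nat.findGreatest_is_greatest (P := K.Head l) (n := i)
      (show K.headOf l i < K.eIdx l (K.headOf l i) + 1 by omega) (by omega) hhead
  · have := lt_of_lt_of_le hi (K.istar_le l)
    omega


/-! ### Measure computations -/

lemma vol_Icc_inter {u v : ℝ} (hu : K.a ≤ u) (hv : v < K.b) :
    volume (Icc u v ∩ Ioo K.a K.b) = ENNReal.ofReal (v - u) := by
  apply le_antisymm
  · calc volume (Icc u v ∩ Ioo K.a K.b) ≤ volume (Icc u v) := measure_mono inter_subset_left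
    _ = ENNReal.ofReal (v - u) := Real.volume_Icc
  · calc ENNReal.ofReal (v - u) = volume (Ioc u v) := Real.volume_Ioc.symm
    _ ≤ volume (Icc u v ∩ Ioo K.a K.b) := measure_mono (fun x hx =>
        ⟨⟨hx.1.le, hx.2⟩, ⟨lt_of_le_of_lt hu hx.1, lt_of_le_of_lt hx.2 hv⟩⟩)

lemma blocks_disj {n n' : ℕ} (h : n ≠ n') :
    Disjoint (Ioo (K.C n) (K.D n)) (Ioo (K.C n') (K.D n')) := by
  rcases lt_or_ge n K.m with hn | hn
  · rcases lt_or_ge n' K.m with hn' | hn'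
    · rcases lt_or_gt_of_ne h with hlt | hlt
      · exact K.disj_lt hlt hn'
      · exact (K.disj_lt hlt hn).symm
    · rw [K.hCs n' hn', K.hDs n' hn']
      simp
  · rw [K.hCs n hn, K.hDs n hn]
    simp

lemma vol_blocks (s : Finset ℕ) :
    volume (⋃ n ∈ s, Ioo (K.C n) (K.D n)) = ENNReal.ofReal (∑ n ∈ s, K.w n) := by
  rw [measure_biUnion_finset ?hd (fun n _ => measurableSet_Ioo)]
  · rw [ENNReal.ofReal_sum_of_nonneg (fun n _ => K.w_nonneg n)]
    exact Finset.sum_congr rfl (fun n _ => Real.volume_Ioo)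
  case hd =>
    intro i _ j _ hij
    exact K.blocks_disj hij

lemma sum_w_Icc {h k : ℕ} (hhk : h ≤ k) :
    ∑ n ∈ Finset.Icc h k, K.w n = K.W (k+1) - K.W h := by
  rw [← Finset.Ico_add_one_right_eq_Icc, Finset.sum_Ico_eq_sub _ (by omega)]
  rfl

lemma sum_w_Ico {h k : ℕ} (hhk : h ≤ k) :
    ∑ n ∈ Finset.Ico h k, K.w n = K.W k - K.W h := by
  rw [Finset.sum_Ico_eq_sub _ hhk]
  rfl

lemma head_cap {l : ℝ} (hl0 : 0 < l) (hl1 : l ≤ 1) {h : ℕ} (hhi : h < K.istar l) :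
    (Icc (K.C h) (K.R l (K.eIdx l h)) ∩ Ioo K.a K.b) ∩ K.Sset
      = ⋃ n ∈ Finset.Icc h (K.eIdx l h), Ioo (K.C n) (K.D n) := by
  have he : K.eIdx l h < K.istar l := K.eIdx_lt_istar hhi
  have him : K.istar l ≤ K.m := K.istar_le l
  ext x
  simp only [mem_inter_iff, Sset, mem_iUnion, Finset.mem_range, Finset.mem_Icc]
  constructor
  · rintro ⟨⟨⟨hCx, hxR⟩, hIoo⟩, n, hn, hxn⟩
    refine ⟨n, ⟨?_, ?_⟩, hxn⟩
    · by_contra hc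
      push_neg at hc
      have := K.hsort n h hc (by omega)
      exact absurd (lt_of_lt_of_le hxn.2 (le_trans this hCx)) (lt_irrefl x)
    · by_contra hc
      push_neg at hc
      have hCnx : K.C n < x := hxn.1
      rcases K.eIdx_break l h with hbr | hbr | hbr
      · have h1 : K.R l (K.eIdx l h) < K.xw l := K.R_lt_xw hl0 he
        have h2 : K.xw l ≤ K.C (K.istar l) := K.xw_le_C_istar hl0
        have h3 : K.C (K.istar l) ≤ K.C n := K.C_mono (by omega)
        linarith
      · have h3 : K.C (K.eIdx l h + 1) ≤ K.C n := K.C_mono (by omega)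
        linarith
      · omega
  · rintro ⟨n, ⟨hhn, hne⟩, hxn⟩
    have hnm : n < K.m := by omega
    have hxab : x ∈ Ioo K.a K.b :=
      ⟨lt_of_le_of_lt (K.ha n hnm) hxn.1, lt_of_lt_of_le hxn.2 (K.hb' n hnm)⟩
    refine ⟨⟨⟨?_, ?_⟩, hxab⟩, n, hnm, hxn⟩
    · exact le_trans (K.C_mono hhn) hxn.1.le
    · exact le_trans hxn.2.le (le_trans (K.D_le_R hl0 hl1 n) (K.R_mono_idx hl0 hne))

lemma wall_cap {l : ℝ} (hl0 : 0 < l) (hl1 : l ≤ 1) :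
    Ico (K.xw l) K.b ∩ K.Sset
      = ⋃ n ∈ Finset.Ico (K.istar l) K.m, Ioo (K.C n) (K.D n) := by
  ext x
  simp only [mem_inter_iff, Sset, mem_iUnion, Finset.mem_range, Finset.mem_Ico]
  constructor
  · rintro ⟨⟨hwx, hxb⟩, n, hn, hxn⟩
    refine ⟨n, ⟨?_, hn⟩, hxn⟩
    by_contra hc
    push_neg at hc
    have h1 : K.D n ≤ K.R l n := K.D_le_R hl0 hl1 n
    have h2 : K.R l n < K.xw l := K.R_lt_xw hl0 hc
    linarith [hxn.2]
  · rintro ⟨n, ⟨hin, hnm⟩, hxn⟩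
    have h1 : K.xw l ≤ K.C n := le_trans (K.xw_le_C_istar hl0) (K.C_mono hin)
    exact ⟨⟨le_trans h1 hxn.1.le, lt_of_lt_of_le hxn.2 (K.hb' n hnm)⟩, n, hnm, hxn⟩

/-! ### The decomposition at each level -/

noncomputable def Jfam (l : ℝ) (k : Fin (K.m + 1)) : Set ℝ :=
  if (k : ℕ) < K.m then
    (if K.Head l (k : ℕ) ∧ (k : ℕ) < K.istar l then
      Icc (K.C (k : ℕ)) (K.R l (K.eIdx l (k : ℕ))) ∩ Ioo K.a K.b else ∅)
  else Ico (K.xw l) K.b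

lemma exists_decomp {l : ℝ} (hsl : K.s < l) (hl1 : l ≤ 1) :
    (∀ k, (K.Jfam l k).OrdConnected) ∧
    Pairwise (onFun Disjoint (K.Jfam l)) ∧
    K.U l = ⋃ k, K.Jfam l k ∧
    (∀ k, volume (K.Sset ∩ K.Jfam l k) = ENNReal.ofReal l * volume (K.Jfam l k)) ∧
    (∀ k, ∃ lo hi : ℕ, hi ≤ K.m ∧
      K.Jfam l k ∩ K.Sset = ⋃ n ∈ Finset.Ico lo hi, Ioo (K.C n) (K.D n)) := by
  have hl0 := K.l_pos hsl
  have him : K.istar l ≤ K.m := K.istar_le l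
  refine ⟨?_, ?_, ?_, ?_, ?_⟩
  · -- ord connected
    intro k
    unfold Jfam
    split_ifs
    · exact ordConnected_Icc.inter ordConnected_Ioo
    · exact ordConnected_empty
    · exact ordConnected_Ico
  · -- pairwise disjoint
    have aux : ∀ k k' : Fin (K.m + 1), (k : ℕ) < (k' : ℕ) →
        Disjoint (K.Jfam l k) (K.Jfam l k') := by
      intro k k' hlt
      have hk'le : (k' : ℕ) ≤ K.m := by have := k'.isLt; omega
      have hkm : (k : ℕ) < K.m := by omega
      unfold Jfam
      rw [if_pos hkm]
      by_cases hhk : K.Head l (k : ℕ) ∧ (k : ℕ) < K.istar l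
      swap
      · rw [if_neg hhk]
        exact empty_disjoint _
      rw [if_pos hhk]
      by_cases hk' : (k' : ℕ) < K.m
      · rw [if_pos hk']
        by_cases hh' : K.Head l (k' : ℕ) ∧ (k' : ℕ) < K.istar l
        · rw [if_pos hh']
          have hsep := K.head_sep hh'.1 hlt hh'.2
          rw [disjoint_left]
          rintro x ⟨⟨-, hx2⟩, -⟩ ⟨⟨hx3, -⟩, -⟩
          linarith
        · rw [if_neg hh']
          exact disjoint_empty _
      · rw [if_neg hk']
        have he : K.eIdx l (k : ℕ) < K.istar l := K.eIdx_lt_istar hhk.2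
        have h1 : K.R l (K.eIdx l (k : ℕ)) < K.xw l := K.R_lt_xw hl0 he
        rw [disjoint_left]
        rintro x ⟨⟨-, hx2⟩, -⟩ ⟨hx3, -⟩
        linarith
    intro k k' hne
    have hvne : (k : ℕ) ≠ (k' : ℕ) := fun hc => hne (Fin.ext hc)
    rcases lt_or_gt_of_ne hvne with hlt | hlt
    · exact aux k k' hlt
    · exact (aux k' k hlt).symm
  · -- union
    apply Subset.antisymm
    · rintro x ⟨hmem, hIoo⟩
      rcases hmem with hmem | hmem
      · simp only [mem_iUnion, Finset.mem_range] at hmem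
        obtain ⟨i, hi, hxi⟩ := hmem
        set h := K.headOf l i with hdef
        have hhle : h ≤ i := K.headOf_le l i
        have hhm : h < K.m := by omega
        refine mem_iUnion.2 ⟨⟨h, by omega⟩, ?_⟩
        unfold Jfam
        rw [if_pos (by simpa using hhm), if_pos ⟨K.headOf_head l i, by simp; omega⟩]
        have hie : i ≤ K.eIdx l h := K.le_eIdx_headOf hi
        refine ⟨⟨le_trans (K.C_mono (by simpa using hhle)) hxi.1, ?_⟩, hIoo⟩
        exact le_trans hxi.2 (K.R_mono_idx hl0 (by simpa using hie))
      · refine mem_iUnion.2 ⟨⟨K.m, by omega⟩, ?_⟩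
        unfold Jfam
        rw [if_neg (by simp)]
        exact hmem
    · intro x hx
      obtain ⟨k, hk⟩ := mem_iUnion.1 hx
      unfold Jfam at hk
      split_ifs at hk with hkm hhk
      · obtain ⟨hH, hKi⟩ := hhk
        obtain ⟨hxI, hxab⟩ := hk
        refine ⟨Or.inl ?_, hxab⟩
        exact K.run_cover hl0 hKi (K.eIdx l (k : ℕ)) (K.eIdx_ge l _) le_rfl hxI
      · exact absurd hk (notMem_empty x)
      · refine ⟨Or.inr hk, ⟨lt_of_lt_of_le (K.xw_gt_a hsl) hk.1, hk.2⟩⟩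
  · -- measures
    intro k
    unfold Jfam
    split_ifs with hkm hhk
    · obtain ⟨hH, hKi⟩ := hhk
      have he : K.eIdx l (k : ℕ) < K.istar l := K.eIdx_lt_istar hKi
      have hbal := K.run_bal hl0 hH (K.eIdx l (k : ℕ)) (K.eIdx_ge l _) le_rfl
      rw [inter_comm, K.head_cap hl0 hl1 hKi, K.vol_blocks,
        K.sum_w_Icc (K.eIdx_ge l _),
        K.vol_Icc_inter (K.ha _ hkm) (lt_of_lt_of_le (K.R_lt_xw hl0 he) (K.xw_le_b hl0)),
        hbal]
      rw [add_sub_cancel_left, ← ENNReal.ofReal_mul hl0.le,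
        mul_div_cancel₀ _ hl0.ne']
    · simp
    · rw [inter_comm, K.wall_cap hl0 hl1, K.vol_blocks, K.sum_w_Ico him,
        Real.volume_Ico]
      have hxwb : K.b - K.xw l = (K.Wm - K.W (K.istar l)) / l := by
        unfold xw
        ring
      rw [hxwb, ← ENNReal.ofReal_mul hl0.le, mul_div_cancel₀ _ hl0.ne']
      rfl
  · -- index sets
    intro k
    unfold Jfam
    split_ifs with hkm hhk
    · obtain ⟨hH, hKi⟩ := hhk
      have he : K.eIdx l (k : ℕ) < K.istar l := K.eIdx_lt_istar hKi
      refine ⟨(k : ℕ), K.eIdx l (k : ℕ) + 1, by omega, ?_⟩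
      rw [Finset.Ico_add_one_right_eq_Icc]
      exact K.head_cap hl0 hl1 hKi
    · exact ⟨0, 0, by omega, by simp⟩
    · exact ⟨K.istar l, K.m, le_rfl, K.wall_cap hl0 hl1⟩

end Cfg
end Stmt15Aux

open Stmt15Aux Set

/-- Lemma 5.2: given an interval `I = (a,b)` and `S = ⋃ⱼ Sⱼ ⊆ I` a finite union
of pairwise disjoint open intervals, there is `f : ℝ → [0,1]` supported in `I`
with `f = 1` on `S`, `f ≥ |S|/|I|` on `I`, and such that for every
`|S|/|I| < λ ≤ 1` the level set `{f ≥ λ}` is a finite disjoint union of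
intervals `J_k` with `|S ∩ J_k| = λ|J_k|` and `J_k ∩ S` a union of some `Sⱼ`. -/
theorem stmt_15 (a b : ℝ) (hab : a < b) (m : ℕ) (hm : 0 < m)
    (c d : Fin m → ℝ) (hcd : ∀ j, c j < d j)
    (hsub : ∀ j, Set.Ioo (c j) (d j) ⊆ Set.Ioo a b)
    (hdisj : Pairwise (onFun Disjoint fun j => Set.Ioo (c j) (d j)))
    (S : Set ℝ) (hS : S = ⋃ j, Set.Ioo (c j) (d j)) :
    ∃ f : ℝ → ℝ,
      (∀ x, 0 ≤ f x ∧ f x ≤ 1) ∧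
      (∀ x ∉ Set.Ioo a b, f x = 0) ∧
      (∀ x ∈ S, f x = 1) ∧
      (∀ x ∈ Set.Ioo a b, (volume S).toReal / (b - a) ≤ f x) ∧
      ∀ l : ℝ, (volume S).toReal / (b - a) < l → l ≤ 1 →
        ∃ (K : ℕ) (J : Fin K → Set ℝ),
          (∀ k, (J k).OrdConnected) ∧
          Pairwise (onFun Disjoint J) ∧
          {x | l ≤ f x} = ⋃ k, J k ∧
          (∀ k, volume (S ∩ J k) = ENNReal.ofReal l * volume (J k)) ∧
          (∀ k, ∃ T : Finset (Fin m), J k ∩ S = ⋃ j ∈ T, Set.Ioo (c j) (d j)) := by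
  subst hS
  set σ : Equiv.Perm (Fin m) := Tuple.sort c with hσdef
  have hmono : Monotone (c ∘ σ) := Tuple.monotone_sort c
  have cinj : Function.Injective c := by
    intro i j hij
    by_contra hne
    have hdis := hdisj hne
    have hmin : c i < min (d i) (d j) := by
      rcases hcd i with h1
      rcases hcd j with h2
      rw [hij] at h1 ⊢
      exact lt_min h1 h2
    set y := (c i + min (d i) (d j)) / 2 with hy
    have hy1 : c i < y := by rw [hy]; linarith
    have hy2 : y < min (d i) (d j) := by rw [hy]; linarith
    have hyi : y ∈ Ioo (c i) (d i) := ⟨hy1, lt_of_lt_of_le hy2 (min_le_left _ _)⟩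
    have hyj : y ∈ Ioo (c j) (d j) := by
      rw [← hij]
      exact ⟨hy1, lt_of_lt_of_le hy2 (min_le_right _ _)⟩
    exact Set.disjoint_left.1 hdis hyi hyj
  have hccst : ∀ i j : Fin m, i < j → c (σ i) < c (σ j) := by
    intro i j hij
    refine (hmono hij.le).lt_of_ne (fun h => ?_)
    exact hij.ne (σ.injective (cinj h))
  have hddcc : ∀ i j : Fin m, i < j → d (σ i) ≤ c (σ j) := by
    intro i j hij
    by_contra hcon
    push_neg at hcon
    have hdis := hdisj (show σ i ≠ σ j from fun h => hij.ne (σ.injective h))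
    have hmin : c (σ j) < min (d (σ i)) (d (σ j)) := lt_min hcon (hcd (σ j))
    set y := (c (σ j) + min (d (σ i)) (d (σ j))) / 2 with hy
    have hy1 : c (σ j) < y := by rw [hy]; linarith
    have hy2 : y < min (d (σ i)) (d (σ j)) := by rw [hy]; linarith
    have hyi : y ∈ Ioo (c (σ i)) (d (σ i)) :=
      ⟨lt_trans (hccst i j hij) hy1, lt_of_lt_of_le hy2 (min_le_left _ _)⟩
    have hyj : y ∈ Ioo (c (σ j)) (d (σ j)) :=
      ⟨hy1, lt_of_lt_of_le hy2 (min_le_right _ _)⟩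
    exact Set.disjoint_left.1 hdis hyi hyj
  have hbounds : ∀ j : Fin m, a ≤ c j ∧ d j ≤ b :=
    fun j => (Set.Ioo_subset_Ioo_iff (hcd j)).1 (hsub j)
  set cfg : Cfg :=
    { a := a
      b := b
      m := m
      C := fun n => if h : n < m then c (σ ⟨n, h⟩) else b
      D := fun n => if h : n < m then d (σ ⟨n, h⟩) else b
      hab := hab
      hm := hm
      hCD := fun n hn => by simp only [dif_pos hn]; exact hcd _
      hsort := fun n n' hnn hn' => by
        simp only [dif_pos hn', dif_pos (lt_trans hnn hn')]
        exact hddcc _ _ (by simpa using hnn)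
      ha := fun n hn => by simp only [dif_pos hn]; exact (hbounds _).1
      hb' := fun n hn => by simp only [dif_pos hn]; exact (hbounds _).2
      hCs := fun n hn => dif_neg (by omega)
      hDs := fun n hn => dif_neg (by omega) } with hcfg
  have hSset : (⋃ j, Ioo (c j) (d j)) = cfg.Sset := by
    ext x
    simp only [Cfg.Sset, mem_iUnion, Finset.mem_range]
    constructor
    · rintro ⟨j, hx⟩
      refine ⟨(σ.symm j : ℕ), (σ.symm j).isLt, ?_⟩
      simp only [hcfg, dif_pos (σ.symm j).isLt, Fin.eta, Equiv.apply_symm_apply]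
      exact hx
    · rintro ⟨n, hn, hx⟩
      refine ⟨σ ⟨n, hn⟩, ?_⟩
      simp only [hcfg] at hx; rw [dif_pos hn, dif_pos hn] at hx
      exact hx
  have hWm : (volume (⋃ j, Ioo (c j) (d j))).toReal = cfg.Wm := by
    rw [hSset, cfg.vol_Sset, ENNReal.toReal_ofReal cfg.Wm_pos.le]
  have hseq : (volume (⋃ j, Ioo (c j) (d j))).toReal / (b - a) = cfg.s := by
    rw [hWm]; rfl
  refine ⟨cfg.f, fun x => ⟨cfg.f_nonneg x, cfg.f_le_one x⟩,
    fun x hx => cfg.f_eq_zero hx,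
    fun x hx => cfg.f_eq_one (hSset ▸ hx),
    fun x hx => by rw [hseq]; exact cfg.f_ge_s hx, ?_⟩
  intro l hsl hl1
  rw [hseq] at hsl
  obtain ⟨hord, hpair, hunion, hmeas, hidx⟩ := cfg.exists_decomp hsl hl1
  refine ⟨m + 1, cfg.Jfam l, hord, hpair, ?_, ?_, ?_⟩
  · rw [cfg.levelset hsl hl1]
    exact hunion
  · intro k
    rw [hSset]
    exact hmeas k
  · intro k
    obtain ⟨lo, hi, hhim, hcap⟩ := hidx k
    refine ⟨Finset.univ.filter
      (fun j : Fin m => lo ≤ ((σ.symm j : Fin m) : ℕ) ∧ ((σ.symm j : Fin m) : ℕ) < hi), ?_⟩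
    rw [hSset, hcap]
    ext x
    simp only [mem_iUnion, Finset.mem_Ico, Finset.mem_filter, Finset.mem_univ, true_and]
    constructor
    · rintro ⟨n, ⟨hlo, hhi⟩, hx⟩
      have hnm : n < m := lt_of_lt_of_le hhi hhim
      refine ⟨σ ⟨n, hnm⟩, ?_, ?_⟩
      · rw [Equiv.symm_apply_apply]
        exact ⟨hlo, hhi⟩
      · simp only [hcfg, dif_pos hnm] at hx
        exact hx
    · rintro ⟨j, ⟨hlo, hhi⟩, hx⟩
      refine ⟨(σ.symm j : ℕ), ⟨hlo, hhi⟩, ?_⟩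
      simp only [hcfg, dif_pos (σ.symm j).isLt, Fin.eta, Equiv.apply_symm_apply]
      exact hx
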